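/- For every h ∈ ℝ and every ξ, Π ∈ ℝ³, the Cayley transform intertwines the two dual trivialized derivatives: cay(hξ̂) · (Π − (h/2)ξ×Π − (h²/4)(ξ·Π)ξ) = Π + (h/2)ξ×Π − (h²/4)(ξ·Π)ξ, i.e. cay(hξ̂)·d⁻(h,ξ,Π) = d⁺(h,ξ,Π). (This is the identity Ad*_{τ(hξ)}[d_{τ⁻¹(g)}τ⁻¹]*μ = [d_{−τ⁻¹(g)}τ⁻¹]*μ for the Cayley retraction on SO(3).) -/

import Mathlib

open Matrix

noncomputable section

/-- The hat map: the 3×3 skew-symmetric matrix `ξ̂` with `ξ̂ v = ξ × v`. -/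
def hat (ξ : Fin 3 → ℝ) : Matrix (Fin 3) (Fin 3) ℝ :=
  !![0, -ξ 2, ξ 1; ξ 2, 0, -ξ 0; -ξ 1, ξ 0, 0]

/-- The Cayley transform `cay(hξ̂) = (I − (h/2)ξ̂)⁻¹ (I + (h/2)ξ̂)`. -/
def cay (h : ℝ) (ξ : Fin 3 → ℝ) : Matrix (Fin 3) (Fin 3) ℝ :=
  (1 - (h / 2) • hat ξ)⁻¹ * (1 + (h / 2) • hat ξ)

/-- `d⁺(h,ξ,Π) = Π + (h/2) ξ×Π − (h²/4)(ξ·Π)ξ`. -/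
def dplus (h : ℝ) (ξ Pv : Fin 3 → ℝ) : Fin 3 → ℝ :=
  Pv + (h / 2) • (ξ ⨯₃ Pv) - (h ^ 2 / 4 * (ξ ⬝ᵥ Pv)) • ξ

/-- `d⁻(h,ξ,Π) = Π − (h/2) ξ×Π − (h²/4)(ξ·Π)ξ`. -/
def dminus (h : ℝ) (ξ Pv : Fin 3 → ℝ) : Fin 3 → ℝ :=
  Pv - (h / 2) • (ξ ⨯₃ Pv) - (h ^ 2 / 4 * (ξ ⬝ᵥ Pv)) • ξ

lemma detA (h : ℝ) (ξ : Fin 3 → ℝ) :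
    (1 - (h / 2) • hat ξ).det = 1 + (h/2)^2 * (ξ 0 ^2 + ξ 1 ^2 + ξ 2 ^2) := by
  simp [hat, Matrix.det_fin_three, Matrix.one_fin_three]
  ring

lemma key (h : ℝ) (ξ Pv : Fin 3 → ℝ) :
    (1 - (h / 2) • hat ξ).mulVec (dplus h ξ Pv)
      = (1 + (h / 2) • hat ξ).mulVec (dminus h ξ Pv) := by
  funext i
  fin_cases i <;>
  · simp [hat, dplus, dminus, Matrix.mulVec, Matrix.one_fin_three, dotProduct,
      crossProduct, Fin.sum_univ_three, Matrix.vecHead, Matrix.vecTail]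
    ring

/-- For every `h ∈ ℝ` and `ξ, Π ∈ ℝ³`, the Cayley transform intertwines the
two dual trivialized derivatives: `cay(hξ̂) · d⁻(h,ξ,Π) = d⁺(h,ξ,Π)`.  This is the
identity `Ad*_{τ(hξ)} [d_{τ⁻¹(g)}τ⁻¹]*μ = [d_{−τ⁻¹(g)}τ⁻¹]*μ` for the Cayley
retraction on `SO(3)`. -/
theorem cay_mulVec_dminus_eq_dplus (h : ℝ) (ξ Pv : Fin 3 → ℝ) :
    (cay h ξ).mulVec (dminus h ξ Pv) = dplus h ξ Pv := by
  have hdet : (1 - (h / 2) • hat ξ).det ≠ 0 := by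
    rw [detA]
    positivity
  have hunit : IsUnit (1 - (h / 2) • hat ξ).det := isUnit_iff_ne_zero.mpr hdet
  rw [cay, ← Matrix.mulVec_mulVec, ← key, Matrix.mulVec_mulVec,
    Matrix.nonsing_inv_mul _ hunit, Matrix.one_mulVec]
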